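/- arXiv:1404.5928 — 4 statements merged into one kernel-verified Lean document; each statement's English description precedes it below -/
import Mathlib

section
/- Let Z be a locally convex space and C ⊆ Z a convex cone with 0 ∈ C and cl C ≠ Z. The partial order ⊇ is total on F(Z,C) = {A ⊆ Z | A = cl(A+C)} if and only if cl C is a closed half-space H⁺(z*) = {z ∈ Z | z*(z) ≥ 0} for some nonzero continuous linear functional z* in the positive dual cone of C. -/
open Set
open scoped Pointwise

theorem stmt7 {Z : Type*} [AddCommGroup Z] [Module ℝ Z] [TopologicalSpace Z]
    [IsTopologicalAddGroup Z] [ContinuousSMul ℝ Z] [LocallyConvexSpace ℝ Z]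
    (C : Set Z) (hConv : Convex ℝ C)
    (hCone : ∀ t : ℝ, 0 < t → ∀ z ∈ C, t • z ∈ C) (h0 : (0 : Z) ∈ C)
    (hne : closure C ≠ Set.univ) :
    (∀ A B : Set Z, A = closure (A + C) → B = closure (B + C) → A ⊆ B ∨ B ⊆ A) ↔
      ∃ w : Z →L[ℝ] ℝ, w ≠ 0 ∧ (∀ z ∈ C, 0 ≤ w z) ∧ closure C = {z : Z | 0 ≤ w z} := by
  classical
  set K := closure C with hKdef
  have hKclosed : IsClosed K := isClosed_closure
  have hKconv : Convex ℝ K := hConv.closure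
  have h0K : (0 : Z) ∈ K := subset_closure h0
  have hKcone : ∀ t : ℝ, 0 < t → ∀ z ∈ K, t • z ∈ K := by
    intro t ht z hz
    exact map_mem_closure (continuous_const_smul t) hz (fun y hy => hCone t ht y hy)
  have hKadd : ∀ x ∈ K, ∀ y ∈ K, x + y ∈ K := by
    intro x hx y hy
    have hm : (1/2 : ℝ) • x + (1/2 : ℝ) • y ∈ K :=
      hKconv hx hy (by norm_num) (by norm_num) (by norm_num)
    have h2 := hKcone 2 (by norm_num) _ hm
    have : (2 : ℝ) • ((1/2 : ℝ) • x + (1/2 : ℝ) • y) = x + y := by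
      rw [smul_add, smul_smul, smul_smul]; norm_num
    rwa [this] at h2
  have hCC : C + C = C := by
    apply Subset.antisymm
    · rintro x hx
      rw [Set.mem_add] at hx
      obtain ⟨c1, hc1, c2, hc2, rfl⟩ := hx
      have hm : (1/2 : ℝ) • c1 + (1/2 : ℝ) • c2 ∈ C :=
        hConv hc1 hc2 (by norm_num) (by norm_num) (by norm_num)
      have h2 := hCone 2 (by norm_num) _ hm
      have : (2 : ℝ) • ((1/2 : ℝ) • c1 + (1/2 : ℝ) • c2) = c1 + c2 := by
        rw [smul_add, smul_smul, smul_smul]; norm_num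
      rwa [this] at h2
    · intro c hc
      have := add_mem_add hc h0
      simpa using this
  have hclosadd : ∀ S : Set Z, closure (closure S + C) = closure (S + C) := by
    intro S
    apply Subset.antisymm
    · have hsub : closure S + C ⊆ closure (S + C) := by
        rintro x hx
        rw [Set.mem_add] at hx
        obtain ⟨s, hs, c, hc, rfl⟩ := hx
        exact map_mem_closure (f := fun y => y + c) (continuous_add_right c) hs
          (fun y hy => add_mem_add hy hc)
      have := closure_mono hsub
      rwa [closure_closure] at this
    · exact closure_mono (add_subset_add_right subset_closure)
  constructor
  · -- forward direction
    intro htot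
    have hKF : K = closure (K + C) := by
      rw [hKdef, hclosadd, hCC]
    have hdich : ∀ z : Z, z ∈ K ∨ -z ∈ K := by
      intro z
      have hA : closure ({z} + C) = closure (closure ({z} + C) + C) := by
        rw [hclosadd, add_assoc, hCC]
      have himg : closure ({z} + C) = (fun y => z + y) '' K := by
        rw [Set.singleton_add, hKdef]
        exact ((Homeomorph.addLeft z).image_closure C).symm
      rcases htot (closure ({z} + C)) K hA hKF with h | h
      · left
        apply h
        apply subset_closure
        have := add_mem_add (mem_singleton z) h0
        simpa using this
      · right
        have h0' : (0 : Z) ∈ closure ({z} + C) := h h0K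
        rw [himg] at h0'
        obtain ⟨k, hk, hk0⟩ := h0'
        have : -z = k := by
          simp only at hk0
          rw [neg_eq_iff_add_eq_zero]
          exact hk0
        rwa [this]
    have hcompl_ne : Kᶜ.Nonempty := Set.nonempty_compl.mpr hne
    have hcompl_open : IsOpen Kᶜ := hKclosed.isOpen_compl
    have hcompl_conv : Convex ℝ Kᶜ := by
      intro x hx y hy a b ha hb hab
      by_contra hp
      rw [Set.mem_compl_iff, not_not] at hp
      have hx' : -x ∈ K := (hdich x).resolve_left hx
      have hy' : -y ∈ K := (hdich y).resolve_left hy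
      rcases eq_or_lt_of_le ha with ha0 | ha0
      · apply hy
        have : b = 1 := by linarith
        simpa [← ha0, this] using hp
      · apply hx
        have hby : b • (-y) ∈ K := by
          rcases eq_or_lt_of_le hb with hb0 | hb0
          · simpa [← hb0] using h0K
          · exact hKcone b hb0 _ hy'
        have hax : a • x ∈ K := by
          have := hKadd _ hp _ hby
          have heq : a • x + b • y + b • (-y) = a • x := by
            rw [smul_neg]; abel
          rwa [heq] at this
        have := hKcone a⁻¹ (by positivity) _ hax
        rwa [smul_smul, inv_mul_cancel₀ (ne_of_gt ha0), one_smul] at this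
    obtain ⟨w, hw⟩ := geometric_hahn_banach_open_point hcompl_conv hcompl_open
      (show (0 : Z) ∉ Kᶜ from fun h => h h0K)
    have hw0 : ∀ a ∉ K, w a < 0 := by
      intro a ha
      have := hw a ha
      simpa using this
    have hpos_sub : {z : Z | 0 ≤ w z} ⊆ K := by
      intro z hz
      by_contra h
      exact absurd (hw0 z h) (not_lt.mpr hz)
    have hKsub : K ⊆ {z : Z | 0 ≤ w z} := by
      intro z hz
      by_contra hzneg
      rw [Set.mem_setOf_eq, not_le] at hzneg
      apply hne
      rw [eq_univ_iff_forall]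
      intro x
      set t := max 1 (w x / w z) with ht_def
      have ht : 0 < t := lt_of_lt_of_le one_pos (le_max_left _ _)
      have hdiv : w x / w z ≤ t := le_max_right _ _
      have h1 : t * w z ≤ w x := (div_le_iff_of_neg hzneg).mp hdiv
      have hx1 : x - t • z ∈ K := by
        apply hpos_sub
        simp only [Set.mem_setOf_eq, map_sub, map_smul, smul_eq_mul]
        linarith
      have hx2 : t • z ∈ K := hKcone t ht z hz
      have := hKadd _ hx1 _ hx2
      simpa using this
    have hwne : w ≠ 0 := by
      obtain ⟨a, haK⟩ := hcompl_ne
      intro h0w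
      have := hw0 a haK
      rw [h0w] at this
      simp at this
    exact ⟨w, hwne, fun z hz => hKsub (subset_closure hz),
      Subset.antisymm hKsub hpos_sub⟩
  · -- backward direction
    rintro ⟨w, hwne, hwC, hKeq⟩ A B hA hB
    have key : ∀ S : Set Z, S = closure (S + C) → ∀ x ∈ S, ∀ y : Z, 0 ≤ w (y - x) → y ∈ S := by
      intro S hS x hx y hy
      have hyx : y - x ∈ closure C := by rw [← hKdef, hKeq]; exact hy
      have hmem : x + (y - x) ∈ closure (S + C) :=
        map_mem_closure (continuous_add_left x) hyx (fun c hc => add_mem_add hx hc)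
      rw [add_sub_cancel] at hmem
      rwa [← hS] at hmem
    by_cases hAB : A ⊆ B
    · exact Or.inl hAB
    · right
      obtain ⟨a, haA, haB⟩ := not_subset.mp hAB
      intro b hbB
      have hwab : w a < w b := by
        by_contra hle
        rw [not_lt] at hle
        refine haB (key B hB b hbB a ?_)
        rw [map_sub]; linarith
      refine key A hA a haA b ?_
      rw [map_sub]; linarith
end

section
/- Let f map X into F(Z,C), be level-closed (i.e. {x | z ∈ f(x)} is closed for each z ∈ Z), and have compact domain dom f = {x | f(x) ≠ ∅}. Then the image family f[X] satisfies the domination property: for every A ∈ f[X] there exists a ⊇-minimal element Ā of f[X] with Ā ⊇ A. -/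
open Set
open scoped Pointwise

/-- Weierstraß-type domination property: a level-closed `F(Z,C)`-valued
function with compact domain has the domination property on its image. -/
theorem stmt8 {X Z : Type*} [TopologicalSpace X] [AddCommGroup Z] [Module ℝ Z]
    [TopologicalSpace Z] (C : Set Z) (hConv : Convex ℝ C)
    (hCone : ∀ t : ℝ, 0 < t → ∀ z ∈ C, t • z ∈ C) (h0 : (0 : Z) ∈ C)
    (f : X → Set Z) (hf : ∀ x, f x = closure (f x + C))
    (hlevel : ∀ z : Z, IsClosed {x : X | z ∈ f x})
    (hdom : IsCompact {x : X | (f x).Nonempty}) :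
    ∀ A ∈ Set.range f, ∃ Abar ∈ Set.range f, A ⊆ Abar ∧
      ∀ A' ∈ Set.range f, Abar ⊆ A' → A' = Abar := by
  intro A hA
  set S : Set (Set Z) := {B | B ∈ Set.range f ∧ A ⊆ B} with hS
  have hKclosed : ∀ B : Set Z, IsClosed {x | B ⊆ f x} := by
    intro B
    have : {x | B ⊆ f x} = ⋂ z ∈ B, {x | z ∈ f x} := by
      ext x; simp [Set.subset_def]
    rw [this]
    exact isClosed_biInter fun z _ => hlevel z
  have key : ∀ c ⊆ S, IsChain (· ⊆ ·) c → c.Nonempty → ∃ ub ∈ S, ∀ B ∈ c, B ⊆ ub := by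
    rintro c hcS hchain ⟨B₀, hB₀⟩
    by_cases hne : ∃ B ∈ c, B.Nonempty
    · obtain ⟨B₁, hB₁c, hB₁ne⟩ := hne
      set c' : Set (Set Z) := {B ∈ c | B.Nonempty} with hc'
      haveI : Nonempty c' := ⟨⟨B₁, hB₁c, hB₁ne⟩⟩
      set K : c' → Set X := fun B => {x | (B : Set Z) ⊆ f x} with hK
      have hKne : ∀ B : c', (K B).Nonempty := by
        rintro ⟨B, hBc, hBne⟩
        obtain ⟨xB, hxB⟩ := (hcS hBc).1
        exact ⟨xB, by simp [hK, hxB]⟩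
      have hKsub : ∀ B : c', K B ⊆ {x : X | (f x).Nonempty} := by
        rintro ⟨B, hBc, hBne⟩ x hx
        exact hBne.mono hx
      have hKcompact : ∀ B : c', IsCompact (K B) :=
        fun B => IsCompact.of_isClosed_subset hdom (hKclosed B) (hKsub B)
      have hKdir : Directed (· ⊇ ·) K := by
        rintro ⟨B, hBc, hBne⟩ ⟨B', hB'c, hB'ne⟩
        rcases eq_or_ne B B' with rfl | hneq
        · exact ⟨⟨B, hBc, hBne⟩, le_refl _, le_refl _⟩
        rcases hchain hBc hB'c hneq with h | h
        · exact ⟨⟨B', hB'c, hB'ne⟩, fun x hx => h.trans hx, le_refl _⟩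
        · exact ⟨⟨B, hBc, hBne⟩, le_refl _, fun x hx => h.trans hx⟩
      obtain ⟨xbar, hxbar⟩ :=
        IsCompact.nonempty_iInter_of_directed_nonempty_isCompact_isClosed K hKdir hKne
          hKcompact (fun B => hKclosed B)
      simp only [Set.mem_iInter] at hxbar
      have hub : ∀ B ∈ c, B ⊆ f xbar := by
        intro B hBc
        rcases B.eq_empty_or_nonempty with rfl | hBne
        · exact empty_subset _
        · exact hxbar ⟨B, hBc, hBne⟩
      exact ⟨f xbar, ⟨⟨xbar, rfl⟩, (hcS hB₁c).2.trans (hub B₁ hB₁c)⟩, hub⟩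
    · push_neg at hne
      refine ⟨B₀, hcS hB₀, fun B hBc => ?_⟩
      rw [hne B hBc]
      exact empty_subset _
  obtain ⟨Abar, hAAbar, hmax⟩ := zorn_subset_nonempty S key A ⟨hA, subset_rfl⟩
  refine ⟨Abar, hmax.prop.1, hmax.prop.2, fun A' hA' hsub => ?_⟩
  exact (hmax.eq_of_subset ⟨hA', hmax.prop.2.trans hsub⟩ hsub).symm
end

section
/- For A, B ∈ G(Z,C) the inf-residuation has the dual representation A ∸ B = ⋂_{z*∈C⁺\{0}} {z ∈ Z | σ△_A(z*) ∸ σ△_B(z*) ≤ z*(z)}, where on the extended reals r ∸ s = inf{t ∈ ℝ | r ≤ s + t} (inf-addition conventions). -/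
open Set
open scoped Pointwise

private lemma eSubAdd (x : EReal) (c : ℝ) : x - (c : EReal) + (c : EReal) = x := by
  induction x <;> simp [← EReal.coe_sub, ← EReal.coe_add]

private lemma eSubLe {x y : EReal} (c : ℝ) : x - (c : EReal) ≤ y ↔ x ≤ y + (c : EReal) :=
  EReal.sub_le_iff_le_add (Or.inl (EReal.coe_ne_bot c)) (Or.inl (EReal.coe_ne_top c))

theorem stmt17 {Z : Type*} [AddCommGroup Z] [Module ℝ Z] [TopologicalSpace Z]
    [IsTopologicalAddGroup Z] [ContinuousSMul ℝ Z] [LocallyConvexSpace ℝ Z]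
    (C : Set Z) (hConv : Convex ℝ C)
    (hCone : ∀ t : ℝ, 0 < t → ∀ z ∈ C, t • z ∈ C) (h0 : (0 : Z) ∈ C)
    (hdual : ∃ w : Z →L[ℝ] ℝ, w ≠ 0 ∧ ∀ z ∈ C, 0 ≤ w z)
    (A B : Set Z) (hA : A = closure (convexHull ℝ (A + C)))
    (hB : B = closure (convexHull ℝ (B + C))) :
    {z : Z | ∀ b ∈ B, b + z ∈ A}
      = ⋂ w ∈ {w : Z →L[ℝ] ℝ | w ≠ 0 ∧ ∀ z ∈ C, 0 ≤ w z},
          {z : Z | sInf {x : EReal | ∃ t : ℝ, x = (t : EReal) ∧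
              (⨅ a ∈ A, (w a : EReal)) ≤ (⨅ b ∈ B, (w b : EReal)) + (t : EReal)}
            ≤ (w z : EReal)} := by
  have hAC : ∀ a ∈ A, ∀ c ∈ C, a + c ∈ A := by
    intro a ha c hc
    rw [hA]
    exact subset_closure (subset_convexHull ℝ _ (add_mem_add ha hc))
  ext z
  simp only [mem_setOf_eq, mem_iInter]
  constructor
  · -- forward direction
    intro hz w hw
    refine sInf_le ⟨w z, rfl, ?_⟩
    by_cases hBne : B.Nonempty
    · -- ⨅ a ∈ A, w a ≤ (⨅ b ∈ B, w b) + w z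
      have key : (⨅ a ∈ A, (w a : EReal)) - (w z : EReal) ≤ ⨅ b ∈ B, (w b : EReal) := by
        refine le_iInf₂ fun b hb => ?_
        rw [eSubLe]
        have : (⨅ a ∈ A, (w a : EReal)) ≤ (w (b + z) : EReal) :=
          iInf₂_le _ (hz b hb)
        rwa [map_add, EReal.coe_add] at this
      calc (⨅ a ∈ A, (w a : EReal))
          = (⨅ a ∈ A, (w a : EReal)) - (w z : EReal) + (w z : EReal) :=
            (eSubAdd _ _).symm
        _ ≤ (⨅ b ∈ B, (w b : EReal)) + (w z : EReal) := add_le_add_left key _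
    · have : B = ∅ := not_nonempty_iff_eq_empty.mp hBne
      simp [this]
  · -- reverse direction
    intro hz b hb
    by_contra hnA
    -- A is closed and convex
    have hAclosed : IsClosed A := hA ▸ isClosed_closure
    have hAconv : Convex ℝ A := hA ▸ (convex_convexHull ℝ _).closure
    obtain ⟨f, u, hfu, hf⟩ := geometric_hahn_banach_point_closed hAconv hAclosed hnA
    rcases A.eq_empty_or_nonempty with hAe | ⟨a₀, ha₀⟩
    · -- A empty: take w from hdual, sInf is ⊤
      obtain ⟨w, hw0, hwC⟩ := hdual
      have h := hz w ⟨hw0, hwC⟩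
      have hBne : (⨅ b ∈ B, (w b : EReal)) ≤ (w b : EReal) := iInf₂_le _ hb
      have : {x : EReal | ∃ t : ℝ, x = (t : EReal) ∧
          (⨅ a ∈ A, (w a : EReal)) ≤ (⨅ b ∈ B, (w b : EReal)) + (t : EReal)} = ∅ := by
        rw [eq_empty_iff_forall_notMem]
        rintro x ⟨t, rfl, ht⟩
        rw [hAe] at ht
        simp only [mem_empty_iff_false, iInf_false, iInf_top] at ht
        have : (⨅ b ∈ B, (w b : EReal)) + (t : EReal) < ⊤ := by
          refine lt_of_le_of_lt (add_le_add_left hBne _) ?_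
          rw [← EReal.coe_add]; exact EReal.coe_lt_top _
        exact absurd (top_le_iff.mp ht) (ne_of_lt this)
      rw [this, sInf_empty, top_le_iff] at h
      exact absurd h (EReal.coe_ne_top _)
    · -- A nonempty; f is nonnegative on C
      have hfC : ∀ c ∈ C, 0 ≤ f c := by
        intro c hc
        by_contra hneg
        push_neg at hneg
        set t : ℝ := (f a₀ - u + 1) / (-f c) with ht
        have hfc' : 0 < -f c := neg_pos.mpr hneg
        have htpos : 0 < t := div_pos (by linarith [hf a₀ ha₀]) hfc'
        have hmem : a₀ + t • c ∈ A := hAC a₀ ha₀ _ (hCone t htpos c hc)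
        have h1 : u < f a₀ + t * f c := by
          have := hf _ hmem
          rwa [map_add, map_smul, smul_eq_mul] at this
        have h2 : t * (-f c) = f a₀ - u + 1 := div_mul_cancel₀ _ (ne_of_gt hfc')
        rw [mul_neg] at h2
        linarith
      have hfne : f ≠ 0 := by
        intro h; rw [h] at hfu hf
        exact absurd (hf a₀ ha₀) (by simpa using not_lt.mpr (le_of_lt hfu))
      have h := hz f ⟨hfne, hfC⟩
      -- every element of the set is ≥ u - f b
      have hlb : ((u - f b : ℝ) : EReal) ≤ sInf {x : EReal | ∃ t : ℝ, x = (t : EReal) ∧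
          (⨅ a ∈ A, (f a : EReal)) ≤ (⨅ b ∈ B, (f b : EReal)) + (t : EReal)} := by
        refine le_sInf ?_
        rintro x ⟨t, rfl, ht⟩
        have hu : ((u : ℝ) : EReal) ≤ ⨅ a ∈ A, (f a : EReal) :=
          le_iInf₂ fun a ha => EReal.coe_le_coe_iff.mpr (le_of_lt (hf a ha))
        have hub : (⨅ b' ∈ B, (f b' : EReal)) ≤ (f b : EReal) := iInf₂_le _ hb
        have : ((u : ℝ) : EReal) ≤ (f b : EReal) + (t : EReal) :=
          le_trans hu (le_trans ht (add_le_add_left hub _))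
        rw [← EReal.coe_add, EReal.coe_le_coe_iff] at this
        exact EReal.coe_le_coe_iff.mpr (by linarith)
      have := le_trans hlb h
      rw [EReal.coe_le_coe_iff] at this
      have : u ≤ f (b + z) := by rw [map_add]; linarith
      linarith [hfu]
end

section
/- Let 𝒜 ⊆ G(Z,C), z* ∈ C⁺\{0} and H⁺(z*) = {z | z*(z) ≥ 0}. Then H⁺(z*) ∸ inf 𝒜 = sup_{A∈𝒜} (H⁺(z*) ∸ A), i.e. {z | cl co ⋃ A + z ⊆ H⁺(z*)} = ⋂_{A∈𝒜} {z | A + z ⊆ H⁺(z*)}. -/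
open Set
open scoped Pointwise

theorem stmt18 {Z : Type*} [AddCommGroup Z] [Module ℝ Z] [TopologicalSpace Z]
    [IsTopologicalAddGroup Z] [ContinuousSMul ℝ Z] [LocallyConvexSpace ℝ Z]
    (C : Set Z) (hConv : Convex ℝ C)
    (hCone : ∀ t : ℝ, 0 < t → ∀ z ∈ C, t • z ∈ C) (h0 : (0 : Z) ∈ C)
    (𝒜 : Set (Set Z)) (h𝒜 : ∀ A ∈ 𝒜, A = closure (convexHull ℝ (A + C)))
    (w : Z →L[ℝ] ℝ) (hw : w ≠ 0) (hw' : ∀ z ∈ C, 0 ≤ w z) :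
    {z : Z | ∀ a ∈ closure (convexHull ℝ (⋃₀ 𝒜)), a + z ∈ {y : Z | 0 ≤ w y}}
      = ⋂ A ∈ 𝒜, {z : Z | ∀ a ∈ A, a + z ∈ {y : Z | 0 ≤ w y}} := by
  ext z
  simp only [mem_iInter, mem_setOf_eq]
  constructor
  · intro h A hA a ha
    exact h a (subset_closure (subset_convexHull ℝ _ ⟨A, hA, ha⟩))
  · intro h a ha
    have hsub : closure (convexHull ℝ (⋃₀ 𝒜)) ⊆ {a : Z | 0 ≤ w (a + z)} := by
      apply closure_minimal
      · apply convexHull_min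
        · rintro x ⟨A, hA, hx⟩
          exact h A hA x hx
        · have : {a : Z | 0 ≤ w (a + z)} = {a : Z | -(w z) ≤ w a} := by
            ext x; simp [neg_le_iff_add_nonneg, add_comm]
          rw [this]
          exact convex_halfSpace_ge (w.toLinearMap.isLinear) _
      · exact isClosed_Ici.preimage (w.continuous.comp (continuous_add_right z))
    exact hsub ha
end
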